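/- A category C with finite products is naturally Mal'tsev if and only if the forgetful functor from internal groupoids in C to reflexive graphs in C is an isomorphism of categories; in particular, in a naturally Mal'tsev category every reflexive graph carries a unique internal groupoid structure. -/

import Mathlib

open CategoryTheory CategoryTheory.Limits

universe v u v' u'

variable {C : Type u} [Category.{v} C]

/-- An internal relation on an object `X`: a pair of jointly monic morphisms. -/
structure RelOn (X : C) where
  R : C
  r1 : R ⟶ X
  r2 : R ⟶ X
  jmono : ∀ {Z : C} (f g : Z ⟶ R), f ≫ r1 = g ≫ r1 → f ≫ r2 = g ≫ r2 → f = g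

namespace RelOn

variable {X : C} (ρ : RelOn X)

def Reflexive : Prop :=
  ∃ δ : X ⟶ ρ.R, δ ≫ ρ.r1 = 𝟙 X ∧ δ ≫ ρ.r2 = 𝟙 X

def Symmetric : Prop :=
  ∃ σ : ρ.R ⟶ ρ.R, σ ≫ ρ.r1 = ρ.r2 ∧ σ ≫ ρ.r2 = ρ.r1

/-- Transitivity, formulated with generalized elements. -/
def Transitive : Prop :=
  ∀ {Z : C} (a b : Z ⟶ ρ.R), a ≫ ρ.r2 = b ≫ ρ.r1 →
    ∃ t : Z ⟶ ρ.R, t ≫ ρ.r1 = a ≫ ρ.r1 ∧ t ≫ ρ.r2 = b ≫ ρ.r2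

def IsEquivalence : Prop := ρ.Reflexive ∧ ρ.Symmetric ∧ ρ.Transitive

/-- The relation is effective: it is the kernel pair of some morphism. -/
def Effective : Prop :=
  ∃ (Y : C) (f : X ⟶ Y) (h : ρ.r1 ≫ f = ρ.r2 ≫ f),
    Nonempty (IsLimit (PullbackCone.mk ρ.r1 ρ.r2 h))

end RelOn

/-- A Mal'tsev category: every internal reflexive relation is an equivalence relation. -/
class MaltsevCat (C : Type u) [Category.{v} C] : Prop where
  refl_is_equiv : ∀ {X : C} (ρ : RelOn X), ρ.Reflexive → ρ.Symmetric ∧ ρ.Transitive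

/-- A regular category: finitely complete, coequalizers of kernel pairs,
pullback-stable regular epimorphisms. -/
class RegularCat (C : Type u) [Category.{v} C] : Prop where
  hasFiniteLimits : HasFiniteLimits C
  hasCoeqOfKernelPair : ∀ {A B R : C} (f : A ⟶ B) (p1 p2 : R ⟶ A) (h : p1 ≫ f = p2 ≫ f),
    Nonempty (IsLimit (PullbackCone.mk p1 p2 h)) → HasCoequalizer p1 p2
  regEpiStable : ∀ {P A B Z : C} (f : A ⟶ B) (g : Z ⟶ B) (p1 : P ⟶ A) (p2 : P ⟶ Z)
    (h : p1 ≫ f = p2 ≫ g), Nonempty (IsLimit (PullbackCone.mk p1 p2 h)) →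
    Nonempty (RegularEpi f) → Nonempty (RegularEpi p2)

/-- A Barr-exact category: regular and every equivalence relation is effective. -/
class ExactCat (C : Type u) [Category.{v} C] extends RegularCat C : Prop where
  effective : ∀ {X : C} (ρ : RelOn X), ρ.IsEquivalence → ρ.Effective

/-- An internal reflexive graph. -/
structure ReflexiveGraph (C : Type u) [Category.{v} C] where
  C1 : C
  C0 : C
  d : C1 ⟶ C0
  c : C1 ⟶ C0
  e : C0 ⟶ C1
  ed : e ≫ d = 𝟙 C0
  ec : e ≫ c = 𝟙 C0

/-- An internal category structure on a reflexive graph, formulated via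
generalized elements (equivalent to the usual pullback formulation in a
finitely complete category). `comp a b _` is the composite "`a` followed by `b`". -/
structure CatStruct {C : Type u} [Category.{v} C] (G : ReflexiveGraph C) where
  comp : ∀ {Z : C} (a b : Z ⟶ G.C1), a ≫ G.c = b ≫ G.d → (Z ⟶ G.C1)
  comp_natural : ∀ {W Z : C} (w : W ⟶ Z) (a b : Z ⟶ G.C1) (h : a ≫ G.c = b ≫ G.d)
      (h' : (w ≫ a) ≫ G.c = (w ≫ b) ≫ G.d),
      w ≫ comp a b h = comp (w ≫ a) (w ≫ b) h'
  comp_d : ∀ {Z : C} (a b : Z ⟶ G.C1) (h : a ≫ G.c = b ≫ G.d), comp a b h ≫ G.d = a ≫ G.d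
  comp_c : ∀ {Z : C} (a b : Z ⟶ G.C1) (h : a ≫ G.c = b ≫ G.d), comp a b h ≫ G.c = b ≫ G.c
  comp_unit_l : ∀ {Z : C} (a : Z ⟶ G.C1) (h : (a ≫ G.d ≫ G.e) ≫ G.c = a ≫ G.d),
      comp (a ≫ G.d ≫ G.e) a h = a
  comp_unit_r : ∀ {Z : C} (a : Z ⟶ G.C1) (h : a ≫ G.c = (a ≫ G.c ≫ G.e) ≫ G.d),
      comp a (a ≫ G.c ≫ G.e) h = a
  comp_assoc : ∀ {Z : C} (a b c' : Z ⟶ G.C1) (h1 : a ≫ G.c = b ≫ G.d)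
      (h2 : b ≫ G.c = c' ≫ G.d)
      (h3 : comp a b h1 ≫ G.c = c' ≫ G.d)
      (h4 : a ≫ G.c = comp b c' h2 ≫ G.d),
      comp (comp a b h1) c' h3 = comp a (comp b c' h2) h4

/-- The internal category has inverses, i.e. is an internal groupoid. -/
def CatStruct.HasInverses {C : Type u} [Category.{v} C] {G : ReflexiveGraph C}
    (S : CatStruct G) : Prop :=
  ∃ i : G.C1 ⟶ G.C1, i ≫ G.d = G.c ∧ i ≫ G.c = G.d ∧
    (∀ {Z : C} (a : Z ⟶ G.C1) (h : a ≫ G.c = (a ≫ i) ≫ G.d),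
      S.comp a (a ≫ i) h = a ≫ G.d ≫ G.e) ∧
    (∀ {Z : C} (a : Z ⟶ G.C1) (h : (a ≫ i) ≫ G.c = a ≫ G.d),
      S.comp (a ≫ i) a h = a ≫ G.c ≫ G.e)

/-- An internal groupoid. -/
structure GroupoidObj (C : Type u) [Category.{v} C] where
  graph : ReflexiveGraph C
  str : CatStruct graph
  hasInv : str.HasInverses

/-- Internal functors between internal groupoids. -/
@[ext]
structure GrpdHom (A B : GroupoidObj C) where
  f0 : A.graph.C0 ⟶ B.graph.C0
  f1 : A.graph.C1 ⟶ B.graph.C1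
  hd : f1 ≫ B.graph.d = A.graph.d ≫ f0
  hc : f1 ≫ B.graph.c = A.graph.c ≫ f0
  he : A.graph.e ≫ f1 = f0 ≫ B.graph.e
  hm : ∀ {Z : C} (a b : Z ⟶ A.graph.C1) (h : a ≫ A.graph.c = b ≫ A.graph.d)
      (h' : (a ≫ f1) ≫ B.graph.c = (b ≫ f1) ≫ B.graph.d),
      A.str.comp a b h ≫ f1 = B.str.comp (a ≫ f1) (b ≫ f1) h'

lemma GrpdHom.cond {A B : GroupoidObj C} (f : GrpdHom A B) {Z : C} {a b : Z ⟶ A.graph.C1}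
    (h : a ≫ A.graph.c = b ≫ A.graph.d) :
    (a ≫ f.f1) ≫ B.graph.c = (b ≫ f.f1) ≫ B.graph.d := by
  rw [Category.assoc, f.hc, Category.assoc, f.hd, ← Category.assoc, h, Category.assoc]

def GrpdHom.id (A : GroupoidObj C) : GrpdHom A A where
  f0 := 𝟙 _
  f1 := 𝟙 _
  hd := by simp
  hc := by simp
  he := by simp
  hm := by intros; simp

def GrpdHom.comp {A B D : GroupoidObj C} (f : GrpdHom A B) (g : GrpdHom B D) : GrpdHom A D where
  f0 := f.f0 ≫ g.f0
  f1 := f.f1 ≫ g.f1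
  hd := by rw [Category.assoc, g.hd, ← Category.assoc, f.hd, Category.assoc]
  hc := by rw [Category.assoc, g.hc, ← Category.assoc, f.hc, Category.assoc]
  he := by rw [← Category.assoc, f.he, Category.assoc, g.he, ← Category.assoc]
  hm := by
    intro Z a b h h'
    rw [← Category.assoc, f.hm a b h (f.cond h), g.hm _ _ (f.cond h) (g.cond (f.cond h))]
    simp only [Category.assoc]

instance : Category (GroupoidObj C) where
  Hom := GrpdHom
  id := GrpdHom.id
  comp := GrpdHom.comp
  id_comp f := by apply GrpdHom.ext <;> simp [GrpdHom.comp, GrpdHom.id]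
  comp_id f := by apply GrpdHom.ext <;> simp [GrpdHom.comp, GrpdHom.id]
  assoc f g h := by apply GrpdHom.ext <;> simp [GrpdHom.comp]

/-- Coerce a morphism of internal groupoids to its underlying data. -/
def homToGrpdHom {A B : GroupoidObj C} (f : A ⟶ B) : GrpdHom A B := f

/-- Morphisms of reflexive graphs. -/
@[ext]
structure RGHom (A B : ReflexiveGraph C) where
  f0 : A.C0 ⟶ B.C0
  f1 : A.C1 ⟶ B.C1
  hd : f1 ≫ B.d = A.d ≫ f0
  hc : f1 ≫ B.c = A.c ≫ f0
  he : A.e ≫ f1 = f0 ≫ B.e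

instance : Category (ReflexiveGraph C) where
  Hom := RGHom
  id A := ⟨𝟙 _, 𝟙 _, by simp, by simp, by simp⟩
  comp f g := ⟨f.f0 ≫ g.f0, f.f1 ≫ g.f1,
    by rw [Category.assoc, g.hd, ← Category.assoc, f.hd, Category.assoc],
    by rw [Category.assoc, g.hc, ← Category.assoc, f.hc, Category.assoc],
    by rw [← Category.assoc, f.he, Category.assoc, g.he, ← Category.assoc]⟩
  id_comp f := by apply RGHom.ext <;> simp
  comp_id f := by apply RGHom.ext <;> simp
  assoc f g h := by apply RGHom.ext <;> simp

def homToRGHom {A B : ReflexiveGraph C} (f : A ⟶ B) : RGHom A B := f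

/-- The forgetful functor from internal groupoids to reflexive graphs. -/
def forgetToRG (C : Type u) [Category.{v} C] : GroupoidObj C ⥤ ReflexiveGraph C where
  obj A := A.graph
  map f := ⟨(homToGrpdHom f).f0, (homToGrpdHom f).f1, (homToGrpdHom f).hd,
    (homToGrpdHom f).hc, (homToGrpdHom f).he⟩
  map_id A := by apply RGHom.ext <;> rfl
  map_comp f g := by apply RGHom.ext <;> rfl

/-- A discrete internal groupoid: the unit is an isomorphism. -/
def GroupoidObj.IsDiscrete (A : GroupoidObj C) : Prop := IsIso A.graph.e

/-- An internal double groupoid (an internal groupoid in internal groupoids) is a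
2-groupoid when its groupoid of objects is discrete. -/
def Is2Grpd (D : GroupoidObj (GroupoidObj C)) : Prop := D.graph.C0.IsDiscrete

/-- Zero morphisms, defined without extra structure: morphisms factoring through a
zero object. -/
def IsZeroMor {A B : C} (f : A ⟶ B) : Prop :=
  ∃ (Z : C) (_ : IsZero Z) (g : A ⟶ Z) (h : Z ⟶ B), f = g ≫ h

/-- `κ` is a kernel of `α`. -/
def IsKernelOf {A B K : C} (κ : K ⟶ A) (α : A ⟶ B) : Prop :=
  IsZeroMor (κ ≫ α) ∧ ∀ {Z : C} (g : Z ⟶ A), IsZeroMor (g ≫ α) → ∃! l : Z ⟶ K, l ≫ κ = g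

/-- A split extension with kernel object `Xo`. -/
structure SplitExtOn (Xo : C) where
  A : C
  B : C
  κ : Xo ⟶ A
  α : A ⟶ B
  β : B ⟶ A
  split : β ≫ α = 𝟙 B
  ker : IsKernelOf κ α

/-- A generic split extension with kernel `Xo`: terminal among split extensions
with kernel `Xo` (morphisms being the identity on the kernel). -/
def IsGenericSplitExt {Xo : C} (E : SplitExtOn Xo) : Prop :=
  ∀ E' : SplitExtOn Xo, ∃! vw : (E'.A ⟶ E.A) × (E'.B ⟶ E.B),
    E'.κ ≫ vw.1 = E.κ ∧ vw.1 ≫ E.α = E'.α ≫ vw.2 ∧ E'.β ≫ vw.1 = vw.2 ≫ E.β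

/-- Action representability: every object admits a generic split extension. -/
def ActionRepresentable (C : Type u) [Category.{v} C] : Prop :=
  ∀ X : C, ∃ E : SplitExtOn X, IsGenericSplitExt E

/-- A protoadditive functor: preserves kernels of split epimorphisms. -/
def Protoadditive {X : Type u'} [Category.{v'} X] (H : X ⥤ C) : Prop :=
  ∀ {A B K : X} (α : A ⟶ B) (β : B ⟶ A), β ≫ α = 𝟙 B →
    ∀ (κ : K ⟶ A), IsKernelOf κ α → IsKernelOf (H.map κ) (H.map α)

/-- A semi-abelian category: pointed, Barr-exact, protomodular (split short five
lemma), with binary coproducts. -/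
class SemiAbelian (C : Type u) [Category.{v} C] extends ExactCat C : Prop where
  hasZeroObject : HasZeroObject C
  hasBinaryCoproducts : HasBinaryCoproducts C
  ssfl : ∀ {A B B' Co : C} (k : A ⟶ B) (p : B ⟶ Co) (s : Co ⟶ B)
      (k' : A ⟶ B') (p' : B' ⟶ Co) (s' : Co ⟶ B') (b : B ⟶ B'),
      s ≫ p = 𝟙 Co → s' ≫ p' = 𝟙 Co → IsKernelOf k p → IsKernelOf k' p' →
      k ≫ b = k' → b ≫ p' = p → s ≫ b = s' → IsIso b

/-- A natural Mal'tsev operation on a category with binary products. -/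
def IsNaturallyMaltsev (C : Type u) [Category.{v} C] [HasBinaryProducts C] : Prop :=
  ∃ p : ∀ A : C, (A ⨯ A) ⨯ A ⟶ A,
    (∀ {A B : C} (f : A ⟶ B), prod.map (prod.map f f) f ≫ p B = p A ≫ f) ∧
    (∀ A : C, prod.lift (prod.lift prod.fst prod.snd) prod.snd ≫ p A
        = (prod.fst : A ⨯ A ⟶ A)) ∧
    (∀ A : C, prod.lift (prod.lift prod.fst prod.fst) prod.snd ≫ p A
        = (prod.snd : A ⨯ A ⟶ A))

/-! ### Auxiliary machinery for statement 13 -/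

attribute [local simp] prod.lift_fst prod.lift_snd prod.lift_fst_assoc prod.lift_snd_assoc

namespace Stmt13Aux

variable {C : Type u} [Category.{v} C] [HasBinaryProducts C]

/-- Ternary operation applied to generalized elements. -/
noncomputable def P3 (p : ∀ A : C, (A ⨯ A) ⨯ A ⟶ A) {Z A : C} (x y z : Z ⟶ A) : Z ⟶ A :=
  prod.lift (prod.lift x y) z ≫ p A

section P3

variable (p : ∀ A : C, (A ⨯ A) ⨯ A ⟶ A)
  (hnat : ∀ {A B : C} (f : A ⟶ B), prod.map (prod.map f f) f ≫ p B = p A ≫ f)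
  (h1 : ∀ A : C, prod.lift (prod.lift prod.fst prod.snd) prod.snd ≫ p A
        = (prod.fst : A ⨯ A ⟶ A))
  (h2 : ∀ A : C, prod.lift (prod.lift prod.fst prod.fst) prod.snd ≫ p A
        = (prod.snd : A ⨯ A ⟶ A))

lemma P3_pre {W Z A : C} (w : W ⟶ Z) (x y z : Z ⟶ A) :
    w ≫ P3 p x y z = P3 p (w ≫ x) (w ≫ y) (w ≫ z) := by
  simp [P3, ← Category.assoc]

include h1 in
lemma P3_xyy {Z A : C} (x y : Z ⟶ A) : P3 p x y y = x := by
  have := congrArg (fun t => prod.lift x y ≫ t) (h1 A)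
  simpa [P3, ← Category.assoc] using this

include h2 in
lemma P3_xxy {Z A : C} (x y : Z ⟶ A) : P3 p x x y = y := by
  have := congrArg (fun t => prod.lift x y ≫ t) (h2 A)
  simpa [P3, ← Category.assoc] using this

include hnat in
lemma P3_post {Z A B : C} (f : A ⟶ B) (x y z : Z ⟶ A) :
    P3 p x y z ≫ f = P3 p (x ≫ f) (y ≫ f) (z ≫ f) := by
  have := congrArg (fun t => prod.lift (prod.lift x y) z ≫ t) (hnat f)
  simpa [P3, ← Category.assoc] using this.symm

include hnat in
lemma P3_lift {Z A B : C} (u1 u2 u3 : Z ⟶ A) (v1 v2 v3 : Z ⟶ B) :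
    P3 p (prod.lift u1 v1) (prod.lift u2 v2) (prod.lift u3 v3)
      = prod.lift (P3 p u1 u2 u3) (P3 p v1 v2 v3) := by
  apply Limits.prod.hom_ext
  · rw [P3_post p hnat]; simp
  · rw [P3_post p hnat]; simp

include hnat in
lemma P3_exchange {Z A : C} (a b c d e f g h i : Z ⟶ A) :
    P3 p (P3 p a b c) (P3 p d e f) (P3 p g h i)
      = P3 p (P3 p a d g) (P3 p b e h) (P3 p c f i) := by
  have key := P3_post p hnat (p A) (prod.lift (prod.lift a b) c)
      (prod.lift (prod.lift d e) f) (prod.lift (prod.lift g h) i)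
  have hM : P3 p (prod.lift (prod.lift a b) c) (prod.lift (prod.lift d e) f)
      (prod.lift (prod.lift g h) i)
      = prod.lift (prod.lift (P3 p a d g) (P3 p b e h)) (P3 p c f i) := by
    rw [P3_lift p hnat, P3_lift p hnat]
  rw [hM] at key
  calc P3 p (P3 p a b c) (P3 p d e f) (P3 p g h i)
      = prod.lift (prod.lift (P3 p a d g) (P3 p b e h)) (P3 p c f i) ≫ p A := key.symm
    _ = _ := rfl

include hnat h1 h2 in
lemma P3_assocL {Z A : C} (x y z u v : Z ⟶ A) :
    P3 p (P3 p x y z) u v = P3 p x y (P3 p z u v) := by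
  have := P3_exchange p hnat x y y y y y z u v
  rw [P3_xyy p h1, P3_xyy p h1, P3_xxy p h2, P3_xxy p h2] at this
  exact this.symm

end P3

lemma _root_.CatStruct.comp_congr {G : ReflexiveGraph C} (S : CatStruct G) {Z : C}
    {a a' b b' : Z ⟶ G.C1} (ha : a = a') (hb : b = b')
    (h : a ≫ G.c = b ≫ G.d) (h' : a' ≫ G.c = b' ≫ G.d) :
    S.comp a b h = S.comp a' b' h' := by subst ha; subst hb; rfl

lemma _root_.CatStruct.ext' {G : ReflexiveGraph C} {S T : CatStruct G}
    (h : ∀ (Z : C) (a b : Z ⟶ G.C1) (hab : a ≫ G.c = b ≫ G.d),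
      S.comp a b hab = T.comp a b hab) : S = T := by
  have hcomp : @CatStruct.comp _ _ G S = @CatStruct.comp _ _ G T := by
    funext Z a b hab; exact h Z a b hab
  cases S; cases T
  simp only at hcomp
  subst hcomp
  rfl

section Canon

variable (p : ∀ A : C, (A ⨯ A) ⨯ A ⟶ A)
  (hnat : ∀ {A B : C} (f : A ⟶ B), prod.map (prod.map f f) f ≫ p B = p A ≫ f)
  (h1 : ∀ A : C, prod.lift (prod.lift prod.fst prod.snd) prod.snd ≫ p A
        = (prod.fst : A ⨯ A ⟶ A))
  (h2 : ∀ A : C, prod.lift (prod.lift prod.fst prod.fst) prod.snd ≫ p A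
        = (prod.snd : A ⨯ A ⟶ A))

/-- The canonical category structure on a reflexive graph in a naturally
Mal'tsev category: `comp a b = p(a, e(c(a)), b)`. -/
noncomputable def canonS (G : ReflexiveGraph C) : CatStruct G where
  comp a b _ := P3 p a (a ≫ G.c ≫ G.e) b
  comp_natural w a b h h' := by
    rw [P3_pre]
    exact congrArg (fun t => P3 p (w ≫ a) t (w ≫ b)) (by simp)
  comp_d a b h := by
    rw [P3_post p hnat]
    have : (a ≫ G.c ≫ G.e) ≫ G.d = b ≫ G.d := by
      simp [G.ed]; exact h
    rw [this, P3_xyy p h1]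
  comp_c a b h := by
    rw [P3_post p hnat]
    have : (a ≫ G.c ≫ G.e) ≫ G.c = a ≫ G.c := by simp [G.ec]
    rw [this, P3_xxy p h2]
  comp_unit_l a h := by
    have e2 : (a ≫ G.d ≫ G.e) ≫ G.c ≫ G.e = a ≫ G.d ≫ G.e := by
      rw [← Category.assoc, h, Category.assoc]
    show P3 p (a ≫ G.d ≫ G.e) ((a ≫ G.d ≫ G.e) ≫ G.c ≫ G.e) a = a
    rw [e2, P3_xxy p h2]
  comp_unit_r a h := P3_xyy p h1 _ _
  comp_assoc a b c' h1' h2' h3 h4 := by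
    have hm : P3 p a (a ≫ G.c ≫ G.e) b ≫ G.c ≫ G.e = b ≫ G.c ≫ G.e := by
      rw [← Category.assoc, P3_post p hnat]
      have e1 : (a ≫ G.c ≫ G.e) ≫ G.c = a ≫ G.c := by simp [G.ec]
      rw [e1, P3_xxy p h2, Category.assoc]
    calc P3 p (P3 p a (a ≫ G.c ≫ G.e) b) (P3 p a (a ≫ G.c ≫ G.e) b ≫ G.c ≫ G.e) c'
        = P3 p (P3 p a (a ≫ G.c ≫ G.e) b) (b ≫ G.c ≫ G.e) c' := by rw [hm]
      _ = P3 p a (a ≫ G.c ≫ G.e) (P3 p b (b ≫ G.c ≫ G.e) c') :=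
          P3_assocL p hnat h1 h2 _ _ _ _ _

noncomputable def canonI (G : ReflexiveGraph C) (p : ∀ A : C, (A ⨯ A) ⨯ A ⟶ A) :
    G.C1 ⟶ G.C1 :=
  P3 p (G.d ≫ G.e) (𝟙 _) (G.c ≫ G.e)

lemma canonI_def (G : ReflexiveGraph C) :
    canonI G p = P3 p (G.d ≫ G.e) (𝟙 _) (G.c ≫ G.e) := rfl

lemma canonI_el (G : ReflexiveGraph C) {Z : C} (a : Z ⟶ G.C1) :
    a ≫ canonI G p = P3 p (a ≫ G.d ≫ G.e) a (a ≫ G.c ≫ G.e) := by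
  rw [canonI_def, P3_pre]; simp

include hnat h1 h2 in
lemma canon_hasInv (G : ReflexiveGraph C) : (canonS p hnat h1 h2 G).HasInverses := by
  refine ⟨canonI G p, ?_, ?_, ?_, ?_⟩
  · rw [canonI_def, P3_post p hnat]
    have e1 : (G.d ≫ G.e) ≫ G.d = G.d := by rw [Category.assoc, G.ed, Category.comp_id]
    have e2 : (G.c ≫ G.e) ≫ G.d = G.c := by rw [Category.assoc, G.ed, Category.comp_id]
    rw [e1, Category.id_comp, e2, P3_xxy p h2]
  · rw [canonI_def, P3_post p hnat]
    have e1 : (G.d ≫ G.e) ≫ G.c = G.d := by rw [Category.assoc, G.ec, Category.comp_id]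
    have e2 : (G.c ≫ G.e) ≫ G.c = G.c := by rw [Category.assoc, G.ec, Category.comp_id]
    rw [e1, Category.id_comp, e2, P3_xyy p h1]
  · intro Z a h
    show P3 p a (a ≫ G.c ≫ G.e) (a ≫ canonI G p) = a ≫ G.d ≫ G.e
    rw [canonI_el]
    set m := a ≫ G.c ≫ G.e with hm
    set n := a ≫ G.d ≫ G.e with hn
    have ex := P3_exchange p hnat a a a a a m n a m
    rw [P3_xxy p h2 a a, P3_xxy p h2 a m, P3_xxy p h2 a n, P3_xyy p h1 a m,
      P3_xyy p h1 n a] at ex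
    exact ex
  · intro Z a h
    show P3 p (a ≫ canonI G p) ((a ≫ canonI G p) ≫ G.c ≫ G.e) a = a ≫ G.c ≫ G.e
    have hcm : (a ≫ canonI G p) ≫ G.c ≫ G.e = a ≫ G.d ≫ G.e := by
      rw [canonI_el, ← Category.assoc, P3_post p hnat]
      have e1 : (a ≫ G.d ≫ G.e) ≫ G.c = a ≫ G.d := by
        rw [Category.assoc, Category.assoc, G.ec, Category.comp_id]
      have e2 : (a ≫ G.c ≫ G.e) ≫ G.c = a ≫ G.c := by
        rw [Category.assoc, Category.assoc, G.ec, Category.comp_id]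
      rw [e1, e2, P3_xyy p h1, Category.assoc]
    rw [hcm, canonI_el]
    set m := a ≫ G.c ≫ G.e with hm
    set n := a ≫ G.d ≫ G.e with hn
    have ex := P3_exchange p hnat n a m n a a a a a
    rw [P3_xyy p h1 n a, P3_xxy p h2 a a, P3_xxy p h2 n a, P3_xyy p h1 m a,
      P3_xxy p h2 a m] at ex
    exact ex

include hnat h1 h2 in
lemma comp_unique [HasPullbacks C] {G : ReflexiveGraph C} (S : CatStruct G) {Z : C}
    (a b : Z ⟶ G.C1) (h : a ≫ G.c = b ≫ G.d) :
    S.comp a b h = P3 p a (a ≫ G.c ≫ G.e) b := by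
  set m' := S.comp (pullback.fst G.c G.d) (pullback.snd G.c G.d) pullback.condition with hm'
  have hS : ∀ {W : C} (x y : W ⟶ G.C1) (hxy : x ≫ G.c = y ≫ G.d),
      S.comp x y hxy = pullback.lift x y hxy ≫ m' := by
    intro W x y hxy
    have hnat' := S.comp_natural (pullback.lift x y hxy) (pullback.fst G.c G.d)
      (pullback.snd G.c G.d) pullback.condition
      (by rw [pullback.lift_fst, pullback.lift_snd]; exact hxy)
    rw [hnat']
    exact S.comp_congr (pullback.lift_fst _ _ _).symm (pullback.lift_snd _ _ _).symm _ _
  set ace := a ≫ G.c ≫ G.e with hace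
  have hace_d : ace ≫ G.d = a ≫ G.c := by
    rw [hace, Category.assoc, Category.assoc, G.ed, Category.comp_id]
  have hace_c : ace ≫ G.c = a ≫ G.c := by
    rw [hace, Category.assoc, Category.assoc, G.ec, Category.comp_id]
  have c1 : a ≫ G.c = ace ≫ G.d := hace_d.symm
  have c2 : ace ≫ G.c = ace ≫ G.d := by rw [hace_d, hace_c]
  have c3 : ace ≫ G.c = b ≫ G.d := by rw [hace_c, h]
  have hu1 : pullback.lift a ace c1 ≫ m' = a := by
    rw [← hS a ace c1]
    calc S.comp a ace c1 = S.comp a (a ≫ G.c ≫ G.e) (by rw [← hace]; exact c1) :=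
          S.comp_congr rfl hace _ _
      _ = a := S.comp_unit_r a _
  have hace2 : ace = ace ≫ G.d ≫ G.e := by
    rw [← Category.assoc, hace_d, Category.assoc, ← hace]
  have hu2 : pullback.lift ace ace c2 ≫ m' = ace := by
    rw [← hS ace ace c2]
    calc S.comp ace ace c2 = S.comp (ace ≫ G.d ≫ G.e) ace (by rw [← hace2]; exact c2) :=
          S.comp_congr hace2 rfl _ _
      _ = ace := S.comp_unit_l ace _
  have hace3 : ace = b ≫ G.d ≫ G.e := by
    rw [hace, ← Category.assoc, h, Category.assoc]
  have hu3 : pullback.lift ace b c3 ≫ m' = b := by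
    rw [← hS ace b c3]
    calc S.comp ace b c3 = S.comp (b ≫ G.d ≫ G.e) b (by rw [← hace3]; exact c3) :=
          S.comp_congr hace3 rfl _ _
      _ = b := S.comp_unit_l b _
  have hP : P3 p (pullback.lift a ace c1) (pullback.lift ace ace c2)
      (pullback.lift ace b c3) = pullback.lift a b h := by
    apply pullback.hom_ext
    · rw [P3_post p hnat, pullback.lift_fst, pullback.lift_fst, pullback.lift_fst,
        pullback.lift_fst, P3_xyy p h1]
    · rw [P3_post p hnat, pullback.lift_snd, pullback.lift_snd, pullback.lift_snd,
        pullback.lift_snd, P3_xxy p h2]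
  have final := P3_post p hnat m' (pullback.lift a ace c1) (pullback.lift ace ace c2)
    (pullback.lift ace b c3)
  rw [hu1, hu2, hu3, hP] at final
  rw [hS a b h, final]


lemma grpdComp_f0 {A B D : GroupoidObj C} (f : A ⟶ B) (g : B ⟶ D) :
    GrpdHom.f0 (f ≫ g) = GrpdHom.f0 f ≫ GrpdHom.f0 g := rfl

lemma grpdComp_f1 {A B D : GroupoidObj C} (f : A ⟶ B) (g : B ⟶ D) :
    GrpdHom.f1 (f ≫ g) = GrpdHom.f1 f ≫ GrpdHom.f1 g := rfl

lemma grpdEqToHom_f0 {A B : GroupoidObj C} (h : A = B) (q : A.graph.C0 = B.graph.C0) :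
    GrpdHom.f0 (eqToHom h) = eqToHom q := by subst h; rfl

lemma grpdEqToHom_f1 {A B : GroupoidObj C} (h : A = B) (q : A.graph.C1 = B.graph.C1) :
    GrpdHom.f1 (eqToHom h) = eqToHom q := by subst h; rfl

/-- The inverse functor: equip every reflexive graph with its canonical groupoid
structure. -/
noncomputable def Vfun : ReflexiveGraph C ⥤ GroupoidObj C where
  obj G := ⟨G, canonS p hnat h1 h2 G, canon_hasInv p hnat h1 h2 G⟩
  map {G G'} r :=
    { f0 := RGHom.f0 r
      f1 := RGHom.f1 r
      hd := RGHom.hd r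
      hc := RGHom.hc r
      he := RGHom.he r
      hm := by
        intro Z a b h h'
        show P3 p a (a ≫ G.c ≫ G.e) b ≫ RGHom.f1 r
            = P3 p (a ≫ RGHom.f1 r) ((a ≫ RGHom.f1 r) ≫ G'.c ≫ G'.e) (b ≫ RGHom.f1 r)
        rw [P3_post p hnat]
        have key : (a ≫ G.c ≫ G.e) ≫ RGHom.f1 r = (a ≫ RGHom.f1 r) ≫ G'.c ≫ G'.e := by
          calc (a ≫ G.c ≫ G.e) ≫ RGHom.f1 r = a ≫ G.c ≫ G.e ≫ RGHom.f1 r := by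
                rw [Category.assoc, Category.assoc]
            _ = a ≫ G.c ≫ RGHom.f0 r ≫ G'.e := by rw [RGHom.he r]
            _ = a ≫ (G.c ≫ RGHom.f0 r) ≫ G'.e := by rw [Category.assoc]
            _ = a ≫ (RGHom.f1 r ≫ G'.c) ≫ G'.e := by rw [RGHom.hc r]
            _ = (a ≫ RGHom.f1 r) ≫ G'.c ≫ G'.e := by
                rw [Category.assoc, Category.assoc]
        rw [key] }
  map_id G := by apply GrpdHom.ext <;> rfl
  map_comp f g := by apply GrpdHom.ext <;> rfl

include hnat h1 h2 in
lemma Vfun_forget : Vfun p hnat h1 h2 ⋙ forgetToRG C = 𝟭 (ReflexiveGraph C) := rfl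

include hnat h1 h2 in
lemma forget_Vfun [HasPullbacks C] :
    forgetToRG C ⋙ Vfun p hnat h1 h2 = 𝟭 (GroupoidObj C) := by
  have hobj : ∀ A : GroupoidObj C, (Vfun p hnat h1 h2).obj A.graph = A := by
    intro A
    obtain ⟨g, s, hi⟩ := A
    have hs : canonS p hnat h1 h2 g = s :=
      CatStruct.ext' (fun Z a b hab => (comp_unique p hnat h1 h2 s a b hab).symm)
    show (⟨g, canonS p hnat h1 h2 g, canon_hasInv p hnat h1 h2 g⟩ : GroupoidObj C)
        = ⟨g, s, hi⟩
    cases hs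
    rfl
  refine CategoryTheory.Functor.ext hobj (fun A B f => ?_)
  apply GrpdHom.ext
  · rw [grpdComp_f0, grpdComp_f0, grpdEqToHom_f0
        (show (forgetToRG C ⋙ Vfun p hnat h1 h2).obj A = (𝟭 (GroupoidObj C)).obj A from hobj A) rfl,
      grpdEqToHom_f0
        (show (𝟭 (GroupoidObj C)).obj B = (forgetToRG C ⋙ Vfun p hnat h1 h2).obj B from (hobj B).symm) rfl]
    exact (show GrpdHom.f0 f = 𝟙 A.graph.C0 ≫ GrpdHom.f0 f ≫ 𝟙 B.graph.C0 by simp)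
  · rw [grpdComp_f1, grpdComp_f1, grpdEqToHom_f1
        (show (forgetToRG C ⋙ Vfun p hnat h1 h2).obj A = (𝟭 (GroupoidObj C)).obj A from hobj A) rfl,
      grpdEqToHom_f1
        (show (𝟭 (GroupoidObj C)).obj B = (forgetToRG C ⋙ Vfun p hnat h1 h2).obj B from (hobj B).symm) rfl]
    exact (show GrpdHom.f1 f = 𝟙 A.graph.C1 ≫ GrpdHom.f1 f ≫ 𝟙 B.graph.C1 by simp)

end Canon

section Converse

variable (V : ReflexiveGraph C ⥤ GroupoidObj C)
  (hvf : V ⋙ forgetToRG C = 𝟭 (ReflexiveGraph C))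

/-- The category structure on a reflexive graph obtained from the section `V`. -/
noncomputable def SOf (G : ReflexiveGraph C) : CatStruct G :=
  cast (congrArg (fun (X : ReflexiveGraph C) => CatStruct X) (Functor.congr_obj hvf G))
    (V.obj G).str

lemma SOf_heq (G : ReflexiveGraph C) : HEq (V.obj G).str (SOf V hvf G) :=
  (cast_heq _ _).symm

lemma SOf_natural {G G' : ReflexiveGraph C} (r : G ⟶ G') {Z : C} (a b : Z ⟶ G.C1)
    (h : a ≫ G.c = b ≫ G.d)
    (h' : (a ≫ RGHom.f1 r) ≫ G'.c = (b ≫ RGHom.f1 r) ≫ G'.d) :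
    (SOf V hvf G).comp a b h ≫ RGHom.f1 r
      = (SOf V hvf G').comp (a ≫ RGHom.f1 r) (b ≫ RGHom.f1 r) h' := by
  have main : ∀ (D D' : GroupoidObj C) (hD : D.graph = G) (hD' : D'.graph = G')
      (S : CatStruct G) (S' : CatStruct G'), HEq D.str S → HEq D'.str S' →
      ∀ (u : D ⟶ D'),
      (forgetToRG C).map u = eqToHom hD ≫ r ≫ eqToHom hD'.symm →
      S.comp a b h ≫ RGHom.f1 r
        = S'.comp (a ≫ RGHom.f1 r) (b ≫ RGHom.f1 r) h' := by
    intro D D' hD hD' S S' hS hS' u hu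
    obtain ⟨g1, S1, i1⟩ := D
    obtain ⟨g2, S2, i2⟩ := D'
    have e1 : g1 = G := hD
    subst e1
    have e2 : g2 = G' := hD'
    subst e2
    have eS : S = S1 := (eq_of_heq hS).symm
    have eS' : S' = S2 := (eq_of_heq hS').symm
    subst eS; subst eS'
    have hu' : (forgetToRG C).map u = 𝟙 _ ≫ r ≫ 𝟙 _ := hu
    rw [Category.id_comp, Category.comp_id] at hu'
    have hf1 : GrpdHom.f1 u = RGHom.f1 r := congrArg RGHom.f1 hu'
    calc S.comp a b h ≫ RGHom.f1 r
        = S.comp a b h ≫ GrpdHom.f1 u := by rw [hf1]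
      _ = S'.comp (a ≫ GrpdHom.f1 u) (b ≫ GrpdHom.f1 u) (GrpdHom.cond u h) :=
          GrpdHom.hm u a b h _
      _ = S'.comp (a ≫ RGHom.f1 r) (b ≫ RGHom.f1 r) h' :=
          S'.comp_congr (by rw [hf1]) (by rw [hf1]) _ _
  exact main (V.obj G) (V.obj G') (Functor.congr_obj hvf G) (Functor.congr_obj hvf G')
    (SOf V hvf G) (SOf V hvf G') (SOf_heq V hvf G) (SOf_heq V hvf G') (V.map r)
    (Functor.congr_hom hvf r)

/-- The reflexive graph on `A ⨯ A` with both legs the first projection. -/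
noncomputable abbrev graphOf (A : C) : ReflexiveGraph C where
  C1 := A ⨯ A
  C0 := A
  d := prod.fst
  c := prod.fst
  e := prod.lift (𝟙 A) (𝟙 A)
  ed := by simp
  ec := by simp

lemma graphOf_cond (A : C) {Z : C} (x y : Z ⟶ A ⨯ A) (h : x ≫ prod.fst = y ≫ prod.fst) :
    x ≫ (graphOf A).c = y ≫ (graphOf A).d := h

/-- The natural Mal'tsev operation extracted from the section `V`. -/
noncomputable def pN (A : C) : (A ⨯ A) ⨯ A ⟶ A :=
  (SOf V hvf (graphOf A)).comp
    (prod.lift (prod.fst ≫ prod.snd) (prod.fst ≫ prod.fst))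
    (prod.lift (prod.fst ≫ prod.snd) prod.snd)
    (graphOf_cond A _ _ (by simp)) ≫ prod.snd

lemma pN_def (A : C) : pN V hvf A
    = (SOf V hvf (graphOf A)).comp
        (prod.lift (prod.fst ≫ prod.snd) (prod.fst ≫ prod.fst))
        (prod.lift (prod.fst ≫ prod.snd) prod.snd)
        (graphOf_cond A _ _ (by simp)) ≫ prod.snd := rfl

lemma pN_id1 (A : C) :
    prod.lift (prod.lift prod.fst prod.snd) prod.snd ≫ pN V hvf A
      = (prod.fst : A ⨯ A ⟶ A) := by
  have ea : prod.lift (prod.lift prod.fst prod.snd) prod.snd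
      ≫ prod.lift (prod.fst ≫ prod.snd) (prod.fst ≫ prod.fst)
      = prod.lift (prod.snd : A ⨯ A ⟶ A) prod.fst := by
    apply Limits.prod.hom_ext <;> simp
  have eb : prod.lift (prod.lift prod.fst prod.snd) prod.snd
      ≫ prod.lift (prod.fst ≫ prod.snd) prod.snd
      = prod.lift (prod.snd : A ⨯ A ⟶ A) prod.fst ≫ (graphOf A).c ≫ (graphOf A).e := by
    apply Limits.prod.hom_ext <;> simp [graphOf]
  calc prod.lift (prod.lift prod.fst prod.snd) prod.snd ≫ pN V hvf A
      = (prod.lift (prod.lift prod.fst prod.snd) prod.snd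
          ≫ (SOf V hvf (graphOf A)).comp
            (prod.lift (prod.fst ≫ prod.snd) (prod.fst ≫ prod.fst))
            (prod.lift (prod.fst ≫ prod.snd) prod.snd)
            (graphOf_cond A _ _ (by simp))) ≫ prod.snd := by
        rw [pN_def, ← Category.assoc]
    _ = (SOf V hvf (graphOf A)).comp
          (prod.lift (prod.lift prod.fst prod.snd) prod.snd
            ≫ prod.lift (prod.fst ≫ prod.snd) (prod.fst ≫ prod.fst))
          (prod.lift (prod.lift prod.fst prod.snd) prod.snd
            ≫ prod.lift (prod.fst ≫ prod.snd) prod.snd)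
          (graphOf_cond A _ _ (by simp)) ≫ prod.snd := by
        rw [(SOf V hvf (graphOf A)).comp_natural]
    _ = (SOf V hvf (graphOf A)).comp
          (prod.lift (prod.snd : A ⨯ A ⟶ A) prod.fst)
          (prod.lift (prod.snd : A ⨯ A ⟶ A) prod.fst ≫ (graphOf A).c ≫ (graphOf A).e)
          (graphOf_cond A _ _ (by simp [graphOf])) ≫ prod.snd := by
        rw [(SOf V hvf (graphOf A)).comp_congr ea eb]
    _ = prod.lift (prod.snd : A ⨯ A ⟶ A) prod.fst ≫ prod.snd := by
        rw [(SOf V hvf (graphOf A)).comp_unit_r]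
    _ = prod.fst := by simp

lemma pN_id2 (A : C) :
    prod.lift (prod.lift prod.fst prod.fst) prod.snd ≫ pN V hvf A
      = (prod.snd : A ⨯ A ⟶ A) := by
  have ea : prod.lift (prod.lift prod.fst prod.fst) prod.snd
      ≫ prod.lift (prod.fst ≫ prod.snd) (prod.fst ≫ prod.fst)
      = prod.lift (prod.fst : A ⨯ A ⟶ A) prod.snd ≫ (graphOf A).d ≫ (graphOf A).e := by
    apply Limits.prod.hom_ext <;> simp [graphOf]
  have eb : prod.lift (prod.lift prod.fst prod.fst) prod.snd
      ≫ prod.lift (prod.fst ≫ prod.snd) prod.snd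
      = prod.lift (prod.fst : A ⨯ A ⟶ A) prod.snd := by
    apply Limits.prod.hom_ext <;> simp
  calc prod.lift (prod.lift prod.fst prod.fst) prod.snd ≫ pN V hvf A
      = (prod.lift (prod.lift prod.fst prod.fst) prod.snd
          ≫ (SOf V hvf (graphOf A)).comp
            (prod.lift (prod.fst ≫ prod.snd) (prod.fst ≫ prod.fst))
            (prod.lift (prod.fst ≫ prod.snd) prod.snd)
            (graphOf_cond A _ _ (by simp))) ≫ prod.snd := by
        rw [pN_def, ← Category.assoc]
    _ = (SOf V hvf (graphOf A)).comp
          (prod.lift (prod.lift prod.fst prod.fst) prod.snd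
            ≫ prod.lift (prod.fst ≫ prod.snd) (prod.fst ≫ prod.fst))
          (prod.lift (prod.lift prod.fst prod.fst) prod.snd
            ≫ prod.lift (prod.fst ≫ prod.snd) prod.snd)
          (graphOf_cond A _ _ (by simp)) ≫ prod.snd := by
        rw [(SOf V hvf (graphOf A)).comp_natural]
    _ = (SOf V hvf (graphOf A)).comp
          (prod.lift (prod.fst : A ⨯ A ⟶ A) prod.snd ≫ (graphOf A).d ≫ (graphOf A).e)
          (prod.lift (prod.fst : A ⨯ A ⟶ A) prod.snd)
          (graphOf_cond A _ _ (by simp [graphOf])) ≫ prod.snd := by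
        rw [(SOf V hvf (graphOf A)).comp_congr ea eb]
    _ = prod.lift (prod.fst : A ⨯ A ⟶ A) prod.snd ≫ prod.snd := by
        rw [(SOf V hvf (graphOf A)).comp_unit_l]
    _ = prod.snd := by simp

lemma pN_nat {A B : C} (f : A ⟶ B) :
    prod.map (prod.map f f) f ≫ pN V hvf B = pN V hvf A ≫ f := by
  have key := SOf_natural V hvf (G := graphOf A) (G' := graphOf B)
      (⟨f, prod.map f f, by simp [graphOf], by simp [graphOf],
        by apply Limits.prod.hom_ext <;> simp [graphOf]⟩ : RGHom (graphOf A) (graphOf B))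
      (prod.lift (prod.fst ≫ prod.snd) (prod.fst ≫ prod.fst))
      (prod.lift (prod.fst ≫ prod.snd) prod.snd)
      (graphOf_cond A _ _ (by simp))
      (graphOf_cond B _ _ (by simp [graphOf]))
  have ea : prod.map (prod.map f f) f
      ≫ prod.lift ((prod.fst : (B ⨯ B) ⨯ B ⟶ B ⨯ B) ≫ prod.snd) (prod.fst ≫ prod.fst)
      = prod.lift ((prod.fst : (A ⨯ A) ⨯ A ⟶ A ⨯ A) ≫ prod.snd) (prod.fst ≫ prod.fst)
        ≫ prod.map f f := by
    apply Limits.prod.hom_ext <;> simp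
  have eb : prod.map (prod.map f f) f
      ≫ prod.lift ((prod.fst : (B ⨯ B) ⨯ B ⟶ B ⨯ B) ≫ prod.snd) prod.snd
      = prod.lift ((prod.fst : (A ⨯ A) ⨯ A ⟶ A ⨯ A) ≫ prod.snd) prod.snd
        ≫ prod.map f f := by
    apply Limits.prod.hom_ext <;> simp
  calc prod.map (prod.map f f) f ≫ pN V hvf B
      = (prod.map (prod.map f f) f
          ≫ (SOf V hvf (graphOf B)).comp
            (prod.lift (prod.fst ≫ prod.snd) (prod.fst ≫ prod.fst))
            (prod.lift (prod.fst ≫ prod.snd) prod.snd)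
            (graphOf_cond B _ _ (by simp))) ≫ prod.snd := by
        rw [pN_def, ← Category.assoc]
    _ = (SOf V hvf (graphOf B)).comp
          (prod.map (prod.map f f) f
            ≫ prod.lift (prod.fst ≫ prod.snd) (prod.fst ≫ prod.fst))
          (prod.map (prod.map f f) f ≫ prod.lift (prod.fst ≫ prod.snd) prod.snd)
          (graphOf_cond B _ _ (by simp)) ≫ prod.snd := by
        rw [(SOf V hvf (graphOf B)).comp_natural]
    _ = (SOf V hvf (graphOf B)).comp
          (prod.lift (prod.fst ≫ prod.snd) (prod.fst ≫ prod.fst) ≫ prod.map f f)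
          (prod.lift (prod.fst ≫ prod.snd) prod.snd ≫ prod.map f f)
          (graphOf_cond B _ _ (by simp [graphOf])) ≫ prod.snd := by
        rw [(SOf V hvf (graphOf B)).comp_congr ea eb]
    _ = ((SOf V hvf (graphOf A)).comp
          (prod.lift (prod.fst ≫ prod.snd) (prod.fst ≫ prod.fst))
          (prod.lift (prod.fst ≫ prod.snd) prod.snd)
          (graphOf_cond A _ _ (by simp)) ≫ prod.map f f) ≫ prod.snd := by
        rw [key]
    _ = (SOf V hvf (graphOf A)).comp
          (prod.lift (prod.fst ≫ prod.snd) (prod.fst ≫ prod.fst))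
          (prod.lift (prod.fst ≫ prod.snd) prod.snd)
          (graphOf_cond A _ _ (by simp)) ≫ prod.snd ≫ f := by
        rw [Category.assoc]; congr 1; simp
    _ = pN V hvf A ≫ f := by rw [pN_def, Category.assoc]

end Converse

end Stmt13Aux


/-- `C` is naturally Mal'tsev iff the forgetful functor from internal
groupoids to reflexive graphs is an isomorphism of categories; in particular in a
naturally Mal'tsev category every reflexive graph carries a unique internal groupoid
structure. -/
theorem stmt13 (C : Type u) [Category.{v} C] [HasFiniteLimits C] :
    (IsNaturallyMaltsev C ↔
      ∃ V : ReflexiveGraph C ⥤ GroupoidObj C,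
        forgetToRG C ⋙ V = 𝟭 (GroupoidObj C) ∧ V ⋙ forgetToRG C = 𝟭 (ReflexiveGraph C)) ∧
    (IsNaturallyMaltsev C →
      ∀ G : ReflexiveGraph C, ∃! S : CatStruct G, S.HasInverses) := by
  constructor
  · constructor
    · rintro ⟨p, hnat, h1, h2⟩
      exact ⟨Stmt13Aux.Vfun p (fun {A B} f => hnat f) h1 h2,
        Stmt13Aux.forget_Vfun p (fun {A B} f => hnat f) h1 h2,
        Stmt13Aux.Vfun_forget p (fun {A B} f => hnat f) h1 h2⟩
    · rintro ⟨V, -, hvf⟩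
      exact ⟨Stmt13Aux.pN V hvf, fun {A B} f => Stmt13Aux.pN_nat V hvf f,
        Stmt13Aux.pN_id1 V hvf, Stmt13Aux.pN_id2 V hvf⟩
  · rintro ⟨p, hnat, h1, h2⟩ G
    refine ⟨Stmt13Aux.canonS p (fun {A B} f => hnat f) h1 h2 G,
      Stmt13Aux.canon_hasInv p (fun {A B} f => hnat f) h1 h2 G, ?_⟩
    intro S _
    apply CatStruct.ext'
    intro Z a b hab
    exact Stmt13Aux.comp_unique p (fun {A B} f => hnat f) h1 h2 S a b hab
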